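/- Let p < ℓ be real numbers and let (A_N), (B_N) be real sequences with A_N/N² → A₂ ∈ ℝ and B_N/N → B₁ > 0. If −A₂/B₁² > ℓ, then lim_{N→∞} I_{p,ℓ}(A_N, B_N) · e^{−f_N(ℓ)} = 1, where f_N(k) = k A_N + k² B_N²/2. (Equivalently, I_{p,ℓ}(A_N,B_N) ≈ e^{f_N(ℓ)} G(−A_N/B_N − ℓ B_N) at leading order, the argument of G tending to +∞.) -/

import Mathlib

open MeasureTheory Real Filter

/-- The standard Gaussian density `φ(v) = e^{-v²/2}/√(2π)` on `ℝ`. -/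
noncomputable def gaussPDF (v : ℝ) : ℝ := Real.exp (-v ^ 2 / 2) / Real.sqrt (2 * Real.pi)

/-- `I_{p,ℓ}(A,B) = ∫_ℝ φ(v) (1 + e^{A+Bv})^{p-ℓ} e^{ℓ(A+Bv)} dv`. -/
noncomputable def Iint (p ℓ A B : ℝ) : ℝ :=
  ∫ v : ℝ, gaussPDF v * (1 + Real.exp (A + B * v)) ^ (p - ℓ) * Real.exp (ℓ * (A + B * v))

/-- `f_N(k) = k A_N + k² B_N²/2`. -/
noncomputable def fExp (A B k : ℝ) : ℝ := k * A + k ^ 2 * B ^ 2 / 2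

lemma gaussPDF_nonneg (v : ℝ) : 0 ≤ gaussPDF v := by
  unfold gaussPDF; positivity

lemma gaussPDF_eq (v : ℝ) :
    gaussPDF v = Real.exp (-(1/2) * v ^ 2) / Real.sqrt (2 * Real.pi) := by
  unfold gaussPDF; congr 1; ring_nf

lemma gaussPDF_integrable : Integrable gaussPDF := by
  have : gaussPDF = fun v => Real.exp (-(1/2) * v ^ 2) / Real.sqrt (2 * Real.pi) := by
    funext v; exact gaussPDF_eq v
  rw [this]
  exact (integrable_exp_neg_mul_sq (by norm_num)).div_const _

lemma gaussPDF_continuous : Continuous gaussPDF := by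
  unfold gaussPDF
  exact (Real.continuous_exp.comp (by continuity)).div_const _

lemma gaussPDF_integral : ∫ v : ℝ, gaussPDF v = 1 := by
  simp_rw [gaussPDF_eq]
  rw [MeasureTheory.integral_div, integral_gaussian]
  rw [show Real.pi / (1/2) = 2 * Real.pi by ring]
  exact div_self (Real.sqrt_ne_zero'.mpr (by positivity))

/-- Third case of Proposition S1: for `p < ℓ` and `-A₂/B₁² > ℓ`,
`I_{p,ℓ}(A_N, B_N) ≈ e^{f_N(ℓ)}` at leading order. -/
theorem Iint_asymptotics_ell (p ℓ A₂ B₁ : ℝ) (hpl : p < ℓ) (A B : ℕ → ℝ)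
    (hA : Tendsto (fun N : ℕ => A N / (N : ℝ) ^ 2) atTop (nhds A₂))
    (hB : Tendsto (fun N : ℕ => B N / (N : ℝ)) atTop (nhds B₁))
    (hB₁ : 0 < B₁) (h1 : -A₂ / B₁ ^ 2 > ℓ) :
    Tendsto (fun N : ℕ => Iint p ℓ (A N) (B N) * Real.exp (-(fExp (A N) (B N) ℓ)))
      atTop (nhds 1) := by
  have key : ∀ N : ℕ, Iint p ℓ (A N) (B N) * Real.exp (-(fExp (A N) (B N) ℓ))
      = ∫ u : ℝ, gaussPDF u *
          (1 + Real.exp (A N + B N * (u + ℓ * B N))) ^ (p - ℓ) := by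
    intro N
    set a := A N with ha
    set b := B N with hb
    rw [Iint, ← MeasureTheory.integral_mul_const]
    have hpt : ∀ v : ℝ,
        gaussPDF v * (1 + Real.exp (a + b * v)) ^ (p - ℓ) * Real.exp (ℓ * (a + b * v)) *
          Real.exp (-(fExp a b ℓ))
        = gaussPDF (v - ℓ * b) * (1 + Real.exp (a + b * v)) ^ (p - ℓ) := by
      intro v
      have hg : gaussPDF v * Real.exp (ℓ * (a + b * v)) * Real.exp (-(fExp a b ℓ))
          = gaussPDF (v - ℓ * b) := by
        unfold gaussPDF fExp
        rw [div_mul_eq_mul_div, div_mul_eq_mul_div, ← Real.exp_add, ← Real.exp_add]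
        congr 1; ring
      calc gaussPDF v * (1 + Real.exp (a + b * v)) ^ (p - ℓ) * Real.exp (ℓ * (a + b * v)) *
            Real.exp (-(fExp a b ℓ))
          = (gaussPDF v * Real.exp (ℓ * (a + b * v)) * Real.exp (-(fExp a b ℓ))) *
              (1 + Real.exp (a + b * v)) ^ (p - ℓ) := by ring
        _ = gaussPDF (v - ℓ * b) * (1 + Real.exp (a + b * v)) ^ (p - ℓ) := by rw [hg]
    simp_rw [hpt]
    rw [← MeasureTheory.integral_sub_right_eq_self
      (fun u => gaussPDF u * (1 + Real.exp (a + b * (u + ℓ * b))) ^ (p - ℓ)) (ℓ * b)]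
    simp [sub_add_cancel]
  simp_rw [key]
  have main := tendsto_integral_of_dominated_convergence
    (F := fun (N : ℕ) (u : ℝ) => gaussPDF u * (1 + Real.exp (A N + B N * (u + ℓ * B N))) ^ (p - ℓ))
    (f := gaussPDF) gaussPDF ?_ gaussPDF_integrable ?_ ?_
  · rwa [gaussPDF_integral] at main
  · intro n
    refine Continuous.aestronglyMeasurable (gaussPDF_continuous.mul ?_)
    refine Continuous.rpow_const (by continuity) fun x => Or.inl (ne_of_gt ?_)
    positivity
  · intro n
    filter_upwards with u
    have hr0 : (0:ℝ) ≤ (1 + Real.exp (A n + B n * (u + ℓ * B n))) ^ (p - ℓ) :=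
      Real.rpow_nonneg (by positivity) _
    rw [Real.norm_eq_abs, abs_of_nonneg (mul_nonneg (gaussPDF_nonneg u) hr0)]
    have hr1 : (1 + Real.exp (A n + B n * (u + ℓ * B n))) ^ (p - ℓ) ≤ 1 :=
      Real.rpow_le_one_of_one_le_of_nonpos
        (by linarith [Real.exp_pos (A n + B n * (u + ℓ * B n))]) (by linarith)
    exact mul_le_of_le_one_right (gaussPDF_nonneg u) hr1
  · filter_upwards with u
    have hquot : Tendsto
        (fun N : ℕ => (A N + B N * (u + ℓ * B N)) / (N : ℝ) ^ 2) atTop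
        (nhds (A₂ + ℓ * B₁ ^ 2)) := by
      have huN : Tendsto (fun N : ℕ => u / (N : ℝ)) atTop (nhds 0) :=
        Tendsto.div_atTop tendsto_const_nhds tendsto_natCast_atTop_atTop
      have h' : Tendsto
          (fun N : ℕ => A N / (N : ℝ) ^ 2 + (B N / N) * (u / N) + ℓ * ((B N / N) * (B N / N)))
          atTop (nhds (A₂ + B₁ * 0 + ℓ * (B₁ * B₁))) :=
        (hA.add (hB.mul huN)).add ((hB.mul hB).const_mul ℓ)
      have heq : ∀ᶠ N : ℕ in atTop,
          A N / (N : ℝ) ^ 2 + (B N / N) * (u / N) + ℓ * ((B N / N) * (B N / N))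
          = (A N + B N * (u + ℓ * B N)) / (N : ℝ) ^ 2 := by
        filter_upwards [eventually_ge_atTop 1] with N hN
        have hN0 : (N : ℝ) ≠ 0 := Nat.cast_ne_zero.mpr (by omega)
        field_simp
        ring
      have := h'.congr' heq
      convert this using 2
      ring
    have hneg : A₂ + ℓ * B₁ ^ 2 < 0 := by
      have h2 : ℓ * B₁ ^ 2 < -A₂ := (lt_div_iff₀ (by positivity)).mp h1
      linarith
    have hsq : Tendsto (fun N : ℕ => ((N : ℝ)) ^ 2) atTop atTop :=
      (tendsto_pow_atTop two_ne_zero).comp tendsto_natCast_atTop_atTop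
    have hprod : Tendsto (fun N : ℕ => (N : ℝ) ^ 2 * ((A N + B N * (u + ℓ * B N)) / (N : ℝ) ^ 2))
        atTop atBot := hsq.atTop_mul_neg hneg hquot
    have hAB : Tendsto (fun N : ℕ => A N + B N * (u + ℓ * B N)) atTop atBot := by
      refine hprod.congr' ?_
      filter_upwards [eventually_ge_atTop 1] with N hN
      have hN0 : (N : ℝ) ≠ 0 := Nat.cast_ne_zero.mpr (by omega)
      field_simp
    have hexp : Tendsto (fun N : ℕ => Real.exp (A N + B N * (u + ℓ * B N))) atTop (nhds 0) :=
      Real.tendsto_exp_atBot.comp hAB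
    have h1e : Tendsto (fun N : ℕ => 1 + Real.exp (A N + B N * (u + ℓ * B N))) atTop (nhds 1) := by
      simpa using tendsto_const_nhds.add hexp
    have hr : Tendsto (fun N : ℕ => (1 + Real.exp (A N + B N * (u + ℓ * B N))) ^ (p - ℓ))
        atTop (nhds 1) := by
      have := (Real.continuousAt_rpow_const 1 (p - ℓ) (Or.inl one_ne_zero)).tendsto.comp h1e
      simpa [Function.comp_def] using this
    simpa using tendsto_const_nhds.mul hr
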